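/- Local (vertex-star) form of Theorem 3.1(1). Let (m, p_0, p) be a hyperbolic vertex star with edge weights c_j and vertex weight d_0. Suppose q_0 ∈ ℝ³ and q : ZMod m → ℝ³ satisfy ⟨q_j − q_0, p_j − p_0⟩_M = 0 for all j ∈ ZMod m and ⟨q_{j+1} − q_j, p_{j+1} − p_j⟩_M = 0 for all j ∈ ZMod m (an infinitesimal isometric deformation with respect to the Minkowski norm squared). Define f_0 := −⟨q_0, p_0⟩_M and f_j := −⟨q_j, p_j⟩_M (the radial coefficients, so that q_a = f_a·p_a + tangential part). Then ∑_{j∈ZMod m} c_j·(f_j − f_0) = 2·d_0·f_0; i.e. the radial component is a 2-eigenfunction of the discrete hyperbolic Laplacian at the central vertex. -/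

import Mathlib

noncomputable section

/-- Minkowski inner product on `ℝ³` (signature `(−,+,+)`). -/
def mink (x y : Fin 3 → ℝ) : ℝ := -(x 0 * y 0) + x 1 * y 1 + x 2 * y 2

/-- Cross product on `ℝ³` (Euclidean), used for the determinant. -/
def cross3 (x y : Fin 3 → ℝ) : Fin 3 → ℝ :=
  ![x 1 * y 2 - x 2 * y 1, x 2 * y 0 - x 0 * y 2, x 0 * y 1 - x 1 * y 0]

/-- Standard inner product on `ℝ³`. -/
def dot3 (x y : Fin 3 → ℝ) : ℝ := x 0 * y 0 + x 1 * y 1 + x 2 * y 2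

/-- Determinant of three vectors in `ℝ³`. -/
def det3 (x y z : Fin 3 → ℝ) : ℝ := dot3 (cross3 x y) z

/-- The hyperboloid model of the hyperbolic plane. -/
def inH2 (x : Fin 3 → ℝ) : Prop := mink x x = -1 ∧ 0 < x 0

/-- Inverse hyperbolic cosine. -/
def arcosh (x : ℝ) : ℝ := Real.log (x + Real.sqrt (x ^ 2 - 1))

/-- Hyperbolic angle at `p` between `b` and `c` (all points of `ℍ²`). -/
def hypAngle (p b c : Fin 3 → ℝ) : ℝ :=
  Real.arccos (mink (b + mink p b • p) (c + mink p c • p) /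
    (Real.sqrt (mink (b + mink p b • p) (b + mink p b • p)) *
     Real.sqrt (mink (c + mink p c • p) (c + mink p c • p))))

/-- Edge weight `c_j` of the edge `(p₀, p_j)` of a hyperbolic vertex star. -/
def hypStarWeight (m : ℕ) (p0 : Fin 3 → ℝ) (p : ZMod m → Fin 3 → ℝ) (j : ZMod m) : ℝ :=
  (Real.tan ((hypAngle p0 (p j) (p (j+1)) + hypAngle (p j) (p (j+1)) p0
      - hypAngle (p (j+1)) p0 (p j)) / 2)
   + Real.tan ((hypAngle p0 (p (j-1)) (p j) + hypAngle (p j) p0 (p (j-1))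
      - hypAngle (p (j-1)) (p j) p0) / 2))
  / (2 * Real.cosh (arcosh (-(mink p0 (p j))) / 2) ^ 2)

/-- Vertex weight `d₀` of a hyperbolic vertex star. -/
def hypStarVertexWeight (m : ℕ) [NeZero m] (p0 : Fin 3 → ℝ) (p : ZMod m → Fin 3 → ℝ) : ℝ :=
  ∑ j : ZMod m, hypStarWeight m p0 p j * Real.sinh (arcosh (-(mink p0 (p j))) / 2) ^ 2

section Lemmas

private lemma mk_comm (x y : Fin 3 → ℝ) : mink x y = mink y x := by
  simp only [mink]; ring

private lemma mink_subr (v x y : Fin 3 → ℝ) : mink v (x - y) = mink v x - mink v y := by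
  simp only [mink, Pi.sub_apply]; ring

private lemma mink_subl (x y v : Fin 3 → ℝ) : mink (x - y) v = mink x v - mink y v := by
  simp only [mink, Pi.sub_apply]; ring

private lemma det3_swap (x y z : Fin 3 → ℝ) : det3 x z y = -det3 x y z := by
  simp [det3, dot3, cross3]; ring

private lemma det3_cyc (x y z : Fin 3 → ℝ) : det3 y z x = det3 x y z := by
  simp [det3, dot3, cross3]; ring

private lemma gramH (P A B : Fin 3 → ℝ) (hP : mink P P = -1) (hA : mink A A = -1)
    (hB : mink B B = -1) :
    det3 P A B ^ 2 = 1 + 2 * -(mink P A) * -(mink P B) * -(mink A B)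
      - (-(mink P A)) ^ 2 - (-(mink P B)) ^ 2 - (-(mink A B)) ^ 2 := by
  simp only [mink, det3, dot3, cross3, Matrix.cons_val_zero, Matrix.cons_val_one,
    Matrix.head_cons, Matrix.cons_val_two, Matrix.tail_cons] at *
  linear_combination (-1*(B 0)^2 - 1*(A 2)^2*(B 1)^2 + 2*(A 1)*(A 2)*(B 1)*(B 2) - 1*(A 1)^2*(B 2)^2 - 2*(A 0)*(A 2)*(B 0)*(B 2) - 2*(A 0)*(A 1)*(B 0)*(B 1) - 1*(A 0)^2 + 2*(A 0)^2*(B 0)^2) * hP + (-1 + (B 0)^2 - 1*(P 2)^2 - 1*(P 2)^2*(B 1)^2 + 2*(P 2)^2*(B 0)^2 + 2*(P 1)*(P 2)*(B 1)*(B 2) - 1*(P 1)^2 - 1*(P 1)^2*(B 2)^2 + 2*(P 1)^2*(B 0)^2 - 2*(P 0)*(P 2)*(B 0)*(B 2) - 2*(P 0)*(P 1)*(B 0)*(B 1)) * hA + ((A 2)^2 + (A 1)^2 + (P 2)^2 + 2*(P 2)^2*(A 2)^2 + (P 2)^2*(A 1)^2 + 2*(P 1)*(P 2)*(A 1)*(A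 2) + (P 1)^2 + (P 1)^2*(A 2)^2 + 2*(P 1)^2*(A 1)^2 - 2*(P 0)*(P 2)*(A 0)*(A 2) - 2*(P 0)*(P 1)*(A 0)*(A 1)) * hB

private lemma T1 (P A B v : Fin 3 → ℝ) (hP : mink P P = -1) (hA : mink A A = -1)
    (hB : mink B B = -1) :
    (-(mink P B) + -(mink A B) - -(mink P A) - 1) * (-(mink P B) + 1)
        * (mink v A + mink P A * mink v P)
      + (-(mink P A) + -(mink A B) - -(mink P B) - 1) * (-(mink P A) + 1)
        * (mink v B + mink P B * mink v P)
      = det3 P A B * ((-(mink P B) + 1) * det3 P A v - (-(mink P A) + 1) * det3 P B v) := by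
  simp only [mink, det3, dot3, cross3, Matrix.cons_val_zero, Matrix.cons_val_one,
    Matrix.head_cons, Matrix.cons_val_two, Matrix.tail_cons] at *
  linear_combination ((B 0)*(v 0) - 1*(A 2)*(B 1)*(B 2)*(v 1) + (A 2)*(B 1)^2*(v 2) + (A 2)*(B 0)*(B 2)*(v 0) - 1*(A 2)*(B 0)^2*(v 2) + (A 2)^2*(B 1)*(v 1) + (A 1)*(B 2)^2*(v 1) - 1*(A 1)*(B 1)*(B 2)*(v 2) + (A 1)*(B 0)*(B 1)*(v 0) - 1*(A 1)*(B 0)^2*(v 1) - 1*(A 1)*(A 2)*(B 2)*(v 1) - 1*(A 1)*(A 2)*(B 1)*(v 2) + (A 1)^2*(B 2)*(v 2) + (A 0)*(v 0) + (A 0)*(B 0)*(B 2)*(v 2) + (A 0)*(B 0)*(B 1)*(v 1) - 1*(A 0)*(B 0)^2*(v 0) + (A 0)*(A 2)*(B 2)*(v 0) + (A 0)*(A 2)*(B 0)*(v 2) + (A 0)*(A 1)*(B 1)*(v 0) + (A 0)*(A 1)*(B 0)*(v 1) - 1*(A 0)^2*(B 2)*(v 2) - 1*(A 0)^2*(B 1)*(v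 1) - 1*(A 0)^2*(B 0)*(v 0) - 2*(P 2)*(B 0)*(B 2)*(v 0) - 1*(P 2)*(B 0)^2*(v 2) - 1*(P 2)*(A 2)^2*(B 1)^2*(v 2) - 2*(P 2)*(A 2)^2*(B 0)*(B 2)*(v 0) + 2*(P 2)*(A 1)*(A 2)*(B 1)*(B 2)*(v 2) - 1*(P 2)*(A 1)*(A 2)*(B 0)*(B 1)*(v 0) + (P 2)*(A 1)*(A 2)*(B 0)^2*(v 1) - 1*(P 2)*(A 1)^2*(B 2)^2*(v 2) - 1*(P 2)*(A 1)^2*(B 0)*(B 2)*(v 0) - 1*(P 2)*(A 1)^2*(B 0)^2*(v 2) - 2*(P 2)*(A 0)*(A 2)*(v 0) - 2*(P 2)*(A 0)*(A 2)*(B 2)^2*(v 0) - 1*(P 2)*(A 0)*(A 2)*(B 1)^2*(v 0) - 2*(P 2)*(A 0)*(A 2)*(B 0)*(B 2)*(v 2) - 1*(P 2)*(A 0)*(A 2)*(B 0)*(B 1)*(v 1) + 2*(P 2)*(A 0)*(A 2)*(B 0)^2*(v 0) - 1*(P 2)*(A 0)*(A 1)*(B 1)*(B 2)*(v 0) - 1*(P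 2)*(A 0)*(A 1)*(B 0)*(B 2)*(v 1) - 1*(P 2)*(A 0)^2*(v 2) + (P 2)*(A 0)^2*(B 1)*(B 2)*(v 1) - 1*(P 2)*(A 0)^2*(B 1)^2*(v 2) + 2*(P 2)*(A 0)^2*(B 0)*(B 2)*(v 0) + 2*(P 2)*(A 0)^2*(B 0)^2*(v 2) - 2*(P 1)*(B 0)*(B 1)*(v 0) - 1*(P 1)*(B 0)^2*(v 1) - 1*(P 1)*(A 2)^2*(B 1)^2*(v 1) - 1*(P 1)*(A 2)^2*(B 0)*(B 1)*(v 0) - 1*(P 1)*(A 2)^2*(B 0)^2*(v 1) + 2*(P 1)*(A 1)*(A 2)*(B 1)*(B 2)*(v 1) - 1*(P 1)*(A 1)*(A 2)*(B 0)*(B 2)*(v 0) + (P 1)*(A 1)*(A 2)*(B 0)^2*(v 2) - 1*(P 1)*(A 1)^2*(B 2)^2*(v 1) - 2*(P 1)*(A 1)^2*(B 0)*(B 1)*(v 0) - 1*(P 1)*(A 0)*(A 2)*(B 1)*(B 2)*(v 0) - 1*(P 1)*(A 0)*(A 2)*(B 0)*(B 1)*(v 2) - 2*(P 1)*(A 0)*(A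 1)*(v 0) - 1*(P 1)*(A 0)*(A 1)*(B 2)^2*(v 0) - 2*(P 1)*(A 0)*(A 1)*(B 1)^2*(v 0) - 1*(P 1)*(A 0)*(A 1)*(B 0)*(B 2)*(v 2) - 2*(P 1)*(A 0)*(A 1)*(B 0)*(B 1)*(v 1) + 2*(P 1)*(A 0)*(A 1)*(B 0)^2*(v 0) - 1*(P 1)*(A 0)^2*(v 1) - 1*(P 1)*(A 0)^2*(B 2)^2*(v 1) + (P 1)*(A 0)^2*(B 1)*(B 2)*(v 2) + 2*(P 1)*(A 0)^2*(B 0)*(B 1)*(v 0) + 2*(P 1)*(A 0)^2*(B 0)^2*(v 1) + (P 0)*(B 0)^2*(v 0) + (P 0)*(A 2)^2*(B 0)*(B 1)*(v 1) - 1*(P 0)*(A 1)*(A 2)*(B 0)*(B 2)*(v 1) - 1*(P 0)*(A 1)*(A 2)*(B 0)*(B 1)*(v 2) + (P 0)*(A 1)^2*(B 0)*(B 2)*(v 2) - 1*(P 0)*(A 0)*(A 2)*(B 1)*(B 2)*(v 1) + (P 0)*(A 0)*(A 2)*(B 1)^2*(v 2) + 2*(P 0)*(A 0)*(A 2)*(B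 0)*(B 2)*(v 0) + (P 0)*(A 0)*(A 1)*(B 2)^2*(v 1) - 1*(P 0)*(A 0)*(A 1)*(B 1)*(B 2)*(v 2) + 2*(P 0)*(A 0)*(A 1)*(B 0)*(B 1)*(v 0) + (P 0)*(A 0)^2*(v 0) - 2*(P 0)*(A 0)^2*(B 0)^2*(v 0)) * hP + (-1*(B 2)*(v 2) - 1*(B 1)*(v 1) - 1*(P 2)*(v 2) + (P 2)*(B 1)*(B 2)*(v 1) - 1*(P 2)*(B 1)^2*(v 2) + (P 2)*(B 0)*(B 2)*(v 0) + 2*(P 2)*(B 0)^2*(v 2) - 1*(P 2)^2*(B 2)*(v 2) - 1*(P 2)^2*(B 0)*(v 0) - 1*(P 2)^3*(v 2) - 1*(P 2)^3*(B 1)^2*(v 2) + 2*(P 2)^3*(B 0)*(B 2)*(v 0) + 2*(P 2)^3*(B 0)^2*(v 2) - 1*(P 1)*(v 1) - 1*(P 1)*(B 2)^2*(v 1) + (P 1)*(B 1)*(B 2)*(v 2) + (P 1)*(B 0)*(B 1)*(v 0) + 2*(P 1)*(B 0)^2*(v 1) - 1*(P 1)*(P 2)*(B 2)*(v 1) - 1*(P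 1)*(P 2)*(B 1)*(v 2) - 1*(P 1)*(P 2)^2*(v 1) + 2*(P 1)*(P 2)^2*(B 1)*(B 2)*(v 2) - 1*(P 1)*(P 2)^2*(B 1)^2*(v 1) + 2*(P 1)*(P 2)^2*(B 0)*(B 1)*(v 0) + 2*(P 1)*(P 2)^2*(B 0)^2*(v 1) - 1*(P 1)^2*(B 1)*(v 1) - 1*(P 1)^2*(B 0)*(v 0) - 1*(P 1)^2*(P 2)*(v 2) - 1*(P 1)^2*(P 2)*(B 2)^2*(v 2) + 2*(P 1)^2*(P 2)*(B 1)*(B 2)*(v 1) + 2*(P 1)^2*(P 2)*(B 0)*(B 2)*(v 0) + 2*(P 1)^2*(P 2)*(B 0)^2*(v 2) - 1*(P 1)^3*(v 1) - 1*(P 1)^3*(B 2)^2*(v 1) + 2*(P 1)^3*(B 0)*(B 1)*(v 0) + 2*(P 1)^3*(B 0)^2*(v 1) - 1*(P 0)*(B 0)*(B 2)*(v 2) - 1*(P 0)*(B 0)*(B 1)*(v 1) + (P 0)*(P 2)*(B 2)*(v 0) + (P 0)*(P 2)*(B 0)*(v 2) + (P 0)*(P 2)^2*(v 0) + (P 0)*(P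 2)^2*(B 1)^2*(v 0) - 2*(P 0)*(P 2)^2*(B 0)*(B 2)*(v 2) - 2*(P 0)*(P 2)^2*(B 0)^2*(v 0) + (P 0)*(P 1)*(B 1)*(v 0) + (P 0)*(P 1)*(B 0)*(v 1) - 2*(P 0)*(P 1)*(P 2)*(B 1)*(B 2)*(v 0) - 2*(P 0)*(P 1)*(P 2)*(B 0)*(B 2)*(v 1) - 2*(P 0)*(P 1)*(P 2)*(B 0)*(B 1)*(v 2) + (P 0)*(P 1)^2*(v 0) + (P 0)*(P 1)^2*(B 2)^2*(v 0) - 2*(P 0)*(P 1)^2*(B 0)*(B 1)*(v 1) - 2*(P 0)*(P 1)^2*(B 0)^2*(v 0)) * hA + (-1*(A 2)*(v 2) - 1*(A 1)*(v 1) + (P 2)*(v 2) + 2*(P 2)*(A 2)^2*(v 2) + (P 2)*(A 1)*(A 2)*(v 1) + (P 2)*(A 1)^2*(v 2) + (P 2)*(A 0)*(A 2)*(v 0) - 1*(P 2)^2*(A 2)*(v 2) - 1*(P 2)^2*(A 0)*(v 0) + (P 2)^3*(v 2) + 2*(P 2)^3*(A 2)^2*(v 2) + (P 2)^3*(A 1)^2*(v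 2) + 2*(P 2)^3*(A 0)*(A 2)*(v 0) + (P 1)*(v 1) + (P 1)*(A 2)^2*(v 1) + (P 1)*(A 1)*(A 2)*(v 2) + 2*(P 1)*(A 1)^2*(v 1) + (P 1)*(A 0)*(A 1)*(v 0) - 1*(P 1)*(P 2)*(A 2)*(v 1) - 1*(P 1)*(P 2)*(A 1)*(v 2) + (P 1)*(P 2)^2*(v 1) + 2*(P 1)*(P 2)^2*(A 2)^2*(v 1) + 2*(P 1)*(P 2)^2*(A 1)*(A 2)*(v 2) + (P 1)*(P 2)^2*(A 1)^2*(v 1) + 2*(P 1)*(P 2)^2*(A 0)*(A 1)*(v 0) - 1*(P 1)^2*(A 1)*(v 1) - 1*(P 1)^2*(A 0)*(v 0) + (P 1)^2*(P 2)*(v 2) + (P 1)^2*(P 2)*(A 2)^2*(v 2) + 2*(P 1)^2*(P 2)*(A 1)*(A 2)*(v 1) + 2*(P 1)^2*(P 2)*(A 1)^2*(v 2) + 2*(P 1)^2*(P 2)*(A 0)*(A 2)*(v 0) + (P 1)^3*(v 1) + (P 1)^3*(A 2)^2*(v 1) + 2*(P 1)^3*(A 1)^2*(v 1) + 2*(P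 1)^3*(A 0)*(A 1)*(v 0) - 1*(P 0)*(A 0)*(A 2)*(v 2) - 1*(P 0)*(A 0)*(A 1)*(v 1) + (P 0)*(P 2)*(A 2)*(v 0) + (P 0)*(P 2)*(A 0)*(v 2) - 1*(P 0)*(P 2)^2*(v 0) - 2*(P 0)*(P 2)^2*(A 2)^2*(v 0) - 1*(P 0)*(P 2)^2*(A 1)^2*(v 0) - 2*(P 0)*(P 2)^2*(A 0)*(A 2)*(v 2) + (P 0)*(P 1)*(A 1)*(v 0) + (P 0)*(P 1)*(A 0)*(v 1) - 2*(P 0)*(P 1)*(P 2)*(A 1)*(A 2)*(v 0) - 2*(P 0)*(P 1)*(P 2)*(A 0)*(A 2)*(v 1) - 2*(P 0)*(P 1)*(P 2)*(A 0)*(A 1)*(v 2) - 1*(P 0)*(P 1)^2*(v 0) - 1*(P 0)*(P 1)^2*(A 2)^2*(v 0) - 2*(P 0)*(P 1)^2*(A 1)^2*(v 0) - 2*(P 0)*(P 1)^2*(A 0)*(A 1)*(v 1)) * hB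

private lemma P1 (P A B C v : Fin 3 → ℝ) (hP : mink P P = -1) (hB : mink B B = -1) :
    -(det3 A B C) * (-(mink P B) + 1) * (mink v B - mink v P)
      + det3 P B C * (-(mink P B) + 1) * (mink v B - mink v A)
      - det3 P A B * (-(mink P B) + 1) * (mink v C - mink v B)
      + ((-(mink P C) + -(mink B C) - -(mink P B) - 1) * det3 P A B
         + (-(mink P A) + -(mink A B) - -(mink P B) - 1) * det3 P B C) * mink v B = 0 := by
  simp only [mink, det3, dot3, cross3, Matrix.cons_val_zero, Matrix.cons_val_one,
    Matrix.head_cons, Matrix.cons_val_two, Matrix.tail_cons] at *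
  linear_combination ((A 2)*(B 1)*(B 2)*(C 0)*(v 2) + (A 2)*(B 1)^2*(C 0)*(v 1) - 1*(A 2)*(B 0)*(B 2)*(C 1)*(v 2) - 1*(A 2)*(B 0)*(B 1)*(C 1)*(v 1) - 1*(A 2)*(B 0)*(B 1)*(C 0)*(v 0) + (A 2)*(B 0)^2*(C 1)*(v 0) - 1*(A 1)*(B 2)^2*(C 0)*(v 2) - 1*(A 1)*(B 1)*(B 2)*(C 0)*(v 1) + (A 1)*(B 0)*(B 2)*(C 2)*(v 2) + (A 1)*(B 0)*(B 2)*(C 0)*(v 0) + (A 1)*(B 0)*(B 1)*(C 2)*(v 1) - 1*(A 1)*(B 0)^2*(C 2)*(v 0) + (A 0)*(B 2)^2*(C 1)*(v 2) - 1*(A 0)*(B 1)*(B 2)*(C 2)*(v 2) + (A 0)*(B 1)*(B 2)*(C 1)*(v 1) - 1*(A 0)*(B 1)^2*(C 2)*(v 1) - 1*(A 0)*(B 0)*(B 2)*(C 1)*(v 0) + (A 0)*(B 0)*(B 1)*(C 2)*(v 0)) * hP + ((P 2)*(A 1)*(B 2)*(C 0)*(v 2) + (P 2)*(A 1)*(B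 1)*(C 0)*(v 1) - 1*(P 2)*(A 1)*(B 0)*(C 0)*(v 0) - 1*(P 2)*(A 0)*(B 2)*(C 1)*(v 2) - 1*(P 2)*(A 0)*(B 1)*(C 1)*(v 1) + (P 2)*(A 0)*(B 0)*(C 1)*(v 0) - 1*(P 1)*(A 2)*(B 2)*(C 0)*(v 2) - 1*(P 1)*(A 2)*(B 1)*(C 0)*(v 1) + (P 1)*(A 2)*(B 0)*(C 0)*(v 0) + (P 1)*(A 0)*(B 2)*(C 2)*(v 2) + (P 1)*(A 0)*(B 1)*(C 2)*(v 1) - 1*(P 1)*(A 0)*(B 0)*(C 2)*(v 0) + (P 0)*(A 2)*(B 2)*(C 1)*(v 2) + (P 0)*(A 2)*(B 1)*(C 1)*(v 1) - 1*(P 0)*(A 2)*(B 0)*(C 1)*(v 0) - 1*(P 0)*(A 1)*(B 2)*(C 2)*(v 2) - 1*(P 0)*(A 1)*(B 1)*(C 2)*(v 1) + (P 0)*(A 1)*(B 0)*(C 2)*(v 0)) * hB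

private lemma hypAngle_symm (p b c : Fin 3 → ℝ) : hypAngle p b c = hypAngle p c b := by
  unfold hypAngle
  rw [mk_comm (c + mink p c • p) (b + mink p b • p), mul_comm]

private lemma hypAngle_eq (P A B : Fin 3 → ℝ) (hP : mink P P = -1) (hA : mink A A = -1)
    (hB : mink B B = -1) :
    hypAngle P A B = Real.arccos ((-(mink P A) * -(mink P B) - -(mink A B)) /
      (Real.sqrt ((-(mink P A)) ^ 2 - 1) * Real.sqrt ((-(mink P B)) ^ 2 - 1))) := by
  unfold hypAngle
  have m1 : mink (A + mink P A • P) (B + mink P B • P)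
      = -(mink P A) * -(mink P B) - -(mink A B) := by
    simp only [mink, Pi.add_apply, Pi.smul_apply, smul_eq_mul] at *
    linear_combination ((P 2)^2*(A 2)*(B 2) + (P 1)*(P 2)*(A 2)*(B 1) + (P 1)*(P 2)*(A 1)*(B 2) + (P 1)^2*(A 1)*(B 1) - 1*(P 0)*(P 2)*(A 2)*(B 0) - 1*(P 0)*(P 2)*(A 0)*(B 2) - 1*(P 0)*(P 1)*(A 1)*(B 0) - 1*(P 0)*(P 1)*(A 0)*(B 1) + (P 0)^2*(A 0)*(B 0)) * hP
  have m2 : mink (A + mink P A • P) (A + mink P A • P) = (-(mink P A)) ^ 2 - 1 := by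
    simp only [mink, Pi.add_apply, Pi.smul_apply, smul_eq_mul] at *
    linear_combination ((P 2)^2*(A 2)^2 + 2*(P 1)*(P 2)*(A 1)*(A 2) + (P 1)^2*(A 1)^2 - 2*(P 0)*(P 2)*(A 0)*(A 2) - 2*(P 0)*(P 1)*(A 0)*(A 1) + (P 0)^2*(A 0)^2) * hP + (1) * hA
  have m3 : mink (B + mink P B • P) (B + mink P B • P) = (-(mink P B)) ^ 2 - 1 := by
    simp only [mink, Pi.add_apply, Pi.smul_apply, smul_eq_mul] at *
    linear_combination ((P 2)^2*(B 2)^2 + 2*(P 1)*(P 2)*(B 1)*(B 2) + (P 1)^2*(B 1)^2 - 2*(P 0)*(P 2)*(B 0)*(B 2) - 2*(P 0)*(P 1)*(B 0)*(B 1) + (P 0)^2*(B 0)^2) * hP + (1) * hB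
  rw [m1, m2, m3]

private lemma one_le_nm (P A : Fin 3 → ℝ) (hP : inH2 P) (hA : inH2 A) : 1 ≤ -(mink P A) := by
  obtain ⟨hP1, hP2⟩ := hP
  obtain ⟨hA1, hA2⟩ := hA
  simp only [mink] at *
  nlinarith [sq_nonneg (P 1 - A 1), sq_nonneg (P 2 - A 2),
    sq_nonneg (P 1 * A 2 - P 2 * A 1), mul_pos hP2 hA2, sq_nonneg (P 0 * A 0 - 1)]

private lemma one_lt_nm (P A B : Fin 3 → ℝ) (hP : inH2 P) (hA : inH2 A) (hB : inH2 B)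
    (hD : det3 P A B ≠ 0) : 1 < -(mink P A) := by
  rcases lt_or_eq_of_le (one_le_nm P A hP hA) with h | h
  · exact h
  · exfalso
    have hg := gramH P A B hP.1 hA.1 hB.1
    have hd2 : 0 < det3 P A B ^ 2 := by positivity
    nlinarith [sq_nonneg (-(mink P B) - -(mink A B))]

private lemma cosh_arcosh {t : ℝ} (h : 1 ≤ t) : Real.cosh (arcosh t) = t := by
  have h1 : (0:ℝ) ≤ t ^ 2 - 1 := by nlinarith
  have hs := Real.sq_sqrt h1
  have hsn := Real.sqrt_nonneg (t ^ 2 - 1)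
  have hpos : 0 < t + Real.sqrt (t ^ 2 - 1) := by nlinarith
  unfold arcosh
  rw [Real.cosh_eq, Real.exp_log hpos, Real.exp_neg, Real.exp_log hpos]
  rw [eq_comm, ← sub_eq_zero]
  field_simp
  nlinarith [hs]

private lemma cosh_half_sq {t : ℝ} (h : 1 ≤ t) :
    Real.cosh (arcosh t / 2) ^ 2 = (t + 1) / 2 := by
  have h2 : Real.cosh (2 * (arcosh t / 2)) = t := by
    rw [show 2 * (arcosh t / 2) = arcosh t by ring, cosh_arcosh h]
  rw [Real.cosh_two_mul] at h2
  have h3 := Real.cosh_sq (arcosh t / 2)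
  nlinarith [h2, h3]

private lemma sinh_half_sq {t : ℝ} (h : 1 ≤ t) :
    Real.sinh (arcosh t / 2) ^ 2 = (t - 1) / 2 := by
  have h2 : Real.cosh (2 * (arcosh t / 2)) = t := by
    rw [show 2 * (arcosh t / 2) = arcosh t by ring, cosh_arcosh h]
  rw [Real.cosh_two_mul] at h2
  have h3 := Real.cosh_sq (arcosh t / 2)
  nlinarith [h2, h3]

end Lemmas
private lemma arccos_lt_pi' {c : ℝ} (h : -1 < c) : Real.arccos c < Real.pi :=
  lt_of_le_of_ne (Real.arccos_le_pi _) (by rw [Ne, Real.arccos_eq_pi]; intro hh; linarith)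

set_option maxHeartbeats 1600000 in
private lemma tanHalf_core (x y z s Sx Sy Sz : ℝ)
    (hx : 1 < x) (hy : 1 < y) (hz : 1 < z) (hs0 : 0 < s)
    (hs2 : s ^ 2 = 1 + 2 * x * y * z - x ^ 2 - y ^ 2 - z ^ 2)
    (hSxd : Real.sqrt (x ^ 2 - 1) = Sx) (hSyd : Real.sqrt (y ^ 2 - 1) = Sy)
    (hSzd : Real.sqrt (z ^ 2 - 1) = Sz) :
    Real.tan ((Real.arccos ((x * y - z) / (Sx * Sy))
        + Real.arccos ((z * x - y) / (Sz * Sx))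
        - Real.arccos ((y * z - x) / (Sy * Sz))) / 2)
      = (y + z - x - 1) / s := by
  have hSx : Sx ^ 2 = x ^ 2 - 1 := by rw [← hSxd]; exact Real.sq_sqrt (by nlinarith)
  have hSy : Sy ^ 2 = y ^ 2 - 1 := by rw [← hSyd]; exact Real.sq_sqrt (by nlinarith)
  have hSz : Sz ^ 2 = z ^ 2 - 1 := by rw [← hSzd]; exact Real.sq_sqrt (by nlinarith)
  have hSxp : 0 < Sx := by rw [← hSxd]; exact Real.sqrt_pos.mpr (by nlinarith)
  have hSyp : 0 < Sy := by rw [← hSyd]; exact Real.sqrt_pos.mpr (by nlinarith)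
  have hSzp : 0 < Sz := by rw [← hSzd]; exact Real.sqrt_pos.mpr (by nlinarith)
  have hSxne : Sx ≠ 0 := ne_of_gt hSxp
  have hSyne : Sy ≠ 0 := ne_of_gt hSyp
  have hSzne : Sz ≠ 0 := ne_of_gt hSzp
  set cA : ℝ := (x * y - z) / (Sx * Sy) with hcAd
  set cB : ℝ := (z * x - y) / (Sz * Sx) with hcBd
  set cC : ℝ := (y * z - x) / (Sy * Sz) with hcCd
  clear_value cA cB cC
  have hprodxy : Sx ^ 2 * Sy ^ 2 = (x ^ 2 - 1) * (y ^ 2 - 1) := by rw [hSx, hSy]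
  have hprodzx : Sz ^ 2 * Sx ^ 2 = (z ^ 2 - 1) * (x ^ 2 - 1) := by rw [hSz, hSx]
  have hprodyz : Sy ^ 2 * Sz ^ 2 = (y ^ 2 - 1) * (z ^ 2 - 1) := by rw [hSy, hSz]
  have hs2p : 0 < s ^ 2 := pow_pos hs0 2
  have hbAeq : (Sx * Sy) ^ 2 - (x * y - z) ^ 2 = s ^ 2 := by linear_combination hprodxy - hs2
  have hbBeq : (Sz * Sx) ^ 2 - (z * x - y) ^ 2 = s ^ 2 := by linear_combination hprodzx - hs2
  have hbCeq : (Sy * Sz) ^ 2 - (y * z - x) ^ 2 = s ^ 2 := by linear_combination hprodyz - hs2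
  have hbA : (x * y - z) ^ 2 < (Sx * Sy) ^ 2 := by linarith
  have hbB : (z * x - y) ^ 2 < (Sz * Sx) ^ 2 := by linarith
  have hbC : (y * z - x) ^ 2 < (Sy * Sz) ^ 2 := by linarith
  have hcA2 : cA ^ 2 < 1 := by
    rw [hcAd, div_pow]; rw [div_lt_one (pow_pos (mul_pos hSxp hSyp) 2)]; exact hbA
  have hcB2 : cB ^ 2 < 1 := by
    rw [hcBd, div_pow]; rw [div_lt_one (pow_pos (mul_pos hSzp hSxp) 2)]; exact hbB
  have hcC2 : cC ^ 2 < 1 := by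
    rw [hcCd, div_pow]; rw [div_lt_one (pow_pos (mul_pos hSyp hSzp) 2)]; exact hbC
  have hcA1 : -1 < cA ∧ cA < 1 := abs_lt.mp ((sq_lt_one_iff_abs_lt_one cA).mp hcA2)
  have hcB1 : -1 < cB ∧ cB < 1 := abs_lt.mp ((sq_lt_one_iff_abs_lt_one cB).mp hcB2)
  have hcC1 : -1 < cC ∧ cC < 1 := abs_lt.mp ((sq_lt_one_iff_abs_lt_one cC).mp hcC2)
  set A0 : ℝ := Real.arccos cA with hA0d
  set B0 : ℝ := Real.arccos cB with hB0d
  set C0 : ℝ := Real.arccos cC with hC0d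
  clear_value A0 B0 C0
  have hcosA : Real.cos A0 = cA := by rw [hA0d]; exact Real.cos_arccos hcA1.1.le hcA1.2.le
  have hcosB : Real.cos B0 = cB := by rw [hB0d]; exact Real.cos_arccos hcB1.1.le hcB1.2.le
  have hcosC : Real.cos C0 = cC := by rw [hC0d]; exact Real.cos_arccos hcC1.1.le hcC1.2.le
  have hsinA : Real.sin A0 = s / (Sx * Sy) := by
    rw [hA0d, Real.sin_arccos]
    rw [show 1 - cA ^ 2 = (s / (Sx * Sy)) ^ 2 by
      rw [hcAd, div_pow, div_pow, eq_div_iff (ne_of_gt (pow_pos (mul_pos hSxp hSyp) 2))]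
      field_simp
      linear_combination hbAeq]
    exact Real.sqrt_sq (div_nonneg hs0.le (mul_pos hSxp hSyp).le)
  have hsinB : Real.sin B0 = s / (Sz * Sx) := by
    rw [hB0d, Real.sin_arccos]
    rw [show 1 - cB ^ 2 = (s / (Sz * Sx)) ^ 2 by
      rw [hcBd, div_pow, div_pow, eq_div_iff (ne_of_gt (pow_pos (mul_pos hSzp hSxp) 2))]
      field_simp
      linear_combination hbBeq]
    exact Real.sqrt_sq (div_nonneg hs0.le (mul_pos hSzp hSxp).le)
  have hsinC : Real.sin C0 = s / (Sy * Sz) := by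
    rw [hC0d, Real.sin_arccos]
    rw [show 1 - cC ^ 2 = (s / (Sy * Sz)) ^ 2 by
      rw [hcCd, div_pow, div_pow, eq_div_iff (ne_of_gt (pow_pos (mul_pos hSyp hSzp) 2))]
      field_simp
      linear_combination hbCeq]
    exact Real.sqrt_sq (div_nonneg hs0.le (mul_pos hSyp hSzp).le)
  have hA0r : 0 < A0 ∧ A0 < Real.pi :=
    ⟨by rw [hA0d]; exact Real.arccos_pos.mpr hcA1.2, by rw [hA0d]; exact arccos_lt_pi' hcA1.1⟩
  have hB0r : 0 < B0 ∧ B0 < Real.pi :=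
    ⟨by rw [hB0d]; exact Real.arccos_pos.mpr hcB1.2, by rw [hB0d]; exact arccos_lt_pi' hcB1.1⟩
  have hC0r : 0 < C0 ∧ C0 < Real.pi :=
    ⟨by rw [hC0d]; exact Real.arccos_pos.mpr hcC1.2, by rw [hC0d]; exact arccos_lt_pi' hcC1.1⟩
  have hsAB : Real.sin (A0 + B0) * (Sx ^ 2 * Sy * Sz) = s * ((x - 1) * (y + z)) := by
    rw [Real.sin_add, hsinA, hsinB, hcosA, hcosB, hcAd, hcBd]
    field_simp
    ring
  have hsABp : 0 < Real.sin (A0 + B0) := by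
    have hk : 0 < Sx ^ 2 * Sy * Sz := mul_pos (mul_pos (pow_pos hSxp 2) hSyp) hSzp
    have hr : 0 < s * ((x - 1) * (y + z)) :=
      mul_pos hs0 (mul_pos (by linarith) (by linarith))
    have h2 : Real.sin (A0 + B0) = s * ((x - 1) * (y + z)) / (Sx ^ 2 * Sy * Sz) :=
      (eq_div_iff (ne_of_gt hk)).mpr hsAB
    rw [h2]; exact div_pos hr hk
  have hABpi : A0 + B0 < Real.pi := by
    by_contra hcon
    push_neg at hcon
    have h1 : 0 ≤ Real.sin (A0 + B0 - Real.pi) :=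
      Real.sin_nonneg_of_nonneg_of_le_pi (by linarith) (by linarith [hA0r.2, hB0r.2, Real.pi_pos])
    rw [Real.sin_sub_pi] at h1
    linarith
  have hcAB : (Real.cos (A0 + B0) + Real.cos C0) * (Sx ^ 2 * Sy * Sz)
      = (x * y - z) * (z * x - y) - s ^ 2 + (y * z - x) * Sx ^ 2 := by
    rw [Real.cos_add, hsinA, hsinB, hcosA, hcosB, hcosC, hcAd, hcBd, hcCd]
    field_simp
  have hcAB2 : (Real.cos (A0 + B0) + Real.cos C0) * (Sx ^ 2 * Sy * Sz) = s ^ 2 * (x - 1) := by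
    rw [hcAB]
    linear_combination (y * z - x) * hSx - x * hs2
  have hcABp : 0 < Real.cos (A0 + B0) + Real.cos C0 := by
    have hk : 0 < Sx ^ 2 * Sy * Sz := mul_pos (mul_pos (pow_pos hSxp 2) hSyp) hSzp
    have hr : 0 < s ^ 2 * (x - 1) := mul_pos hs2p (by linarith)
    have h2 : Real.cos (A0 + B0) + Real.cos C0 = s ^ 2 * (x - 1) / (Sx ^ 2 * Sy * Sz) :=
      (eq_div_iff (ne_of_gt hk)).mpr hcAB2
    rw [h2]; exact div_pos hr hk
  have hsum : A0 + B0 < Real.pi - C0 := by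
    have h1 : Real.cos (Real.pi - C0) < Real.cos (A0 + B0) := by
      rw [Real.cos_pi_sub]; linarith
    by_contra hcon
    push_neg at hcon
    rcases eq_or_lt_of_le hcon with he | hlt
    · rw [← he] at h1; linarith
    · have := Real.cos_lt_cos_of_nonneg_of_le_pi
        (by linarith [hC0r.2, Real.pi_pos]) (by linarith) hlt
      linarith
  have hθub : A0 + B0 - C0 < Real.pi := by linarith [hC0r.1, hsum]
  have hθlb : -Real.pi < A0 + B0 - C0 := by linarith [hA0r.1, hB0r.1, hC0r.2]
  set θ : ℝ := A0 + B0 - C0 with hθd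
  clear_value θ
  have hcoshalf : 0 < Real.cos (θ / 2) :=
    Real.cos_pos_of_mem_Ioo ⟨by rw [hθd]; linarith, by rw [hθd]; linarith⟩
  have htan : Real.tan (θ / 2) = Real.sin θ / (1 + Real.cos θ) := by
    have hc2 : Real.cos (θ / 2) ≠ 0 := ne_of_gt hcoshalf
    have e1 : Real.sin θ = 2 * Real.sin (θ / 2) * Real.cos (θ / 2) := by
      nth_rewrite 1 [show θ = 2 * (θ / 2) by ring]
      exact Real.sin_two_mul _
    have e2 : 1 + Real.cos θ = 2 * Real.cos (θ / 2) ^ 2 := by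
      nth_rewrite 1 [show θ = 2 * (θ / 2) by ring]
      rw [Real.cos_two_mul]; ring
    rw [Real.tan_eq_sin_div_cos, e1, e2]
    field_simp
  have hSinRaw : Real.sin θ * (Sx ^ 2 * Sy ^ 2 * Sz ^ 2)
      = s * ((z * x - y) * (y * z - x) + (x * y - z) * (y * z - x)
          - (x * y - z) * (z * x - y) + s ^ 2) := by
    rw [hθd, Real.sin_sub, Real.sin_add, Real.cos_add,
      hsinA, hsinB, hsinC, hcosA, hcosB, hcosC, hcAd, hcBd, hcCd]
    field_simp
    ring
  have hSin2 : Real.sin θ * (Sx ^ 2 * Sy ^ 2 * Sz ^ 2)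
      = s * ((y + z - x - 1) * (y + 1) * (z + 1) * (x - 1)) := by
    rw [hSinRaw]; linear_combination s * hs2
  have hCosRaw : (1 + Real.cos θ) * (Sx ^ 2 * Sy ^ 2 * Sz ^ 2)
      = Sx ^ 2 * Sy ^ 2 * Sz ^ 2 + ((x * y - z) * (z * x - y) * (y * z - x)
          - s ^ 2 * (y * z - x) + s ^ 2 * (z * x - y) + s ^ 2 * (x * y - z)) := by
    rw [hθd, Real.cos_sub, Real.cos_add, Real.sin_add,
      hsinA, hsinB, hsinC, hcosA, hcosB, hcosC, hcAd, hcBd, hcCd]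
    field_simp
    ring
  have hCos2 : (1 + Real.cos θ) * (Sx ^ 2 * Sy ^ 2 * Sz ^ 2)
      = s ^ 2 * ((y + 1) * (z + 1) * (x - 1)) := by
    rw [hCosRaw]
    linear_combination (Sy ^ 2 * Sz ^ 2) * hSx + ((x ^ 2 - 1) * Sz ^ 2) * hSy
      + ((x ^ 2 - 1) * (y ^ 2 - 1)) * hSz
      + (-(y * z - x) + (z * x - y) + (x * y - z) - (y + 1) * (z + 1) * (x - 1)) * hs2
  have hK : (0:ℝ) < Sx ^ 2 * Sy ^ 2 * Sz ^ 2 :=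
    mul_pos (mul_pos (pow_pos hSxp 2) (pow_pos hSyp 2)) (pow_pos hSzp 2)
  have h1cp : 0 < 1 + Real.cos θ := by
    have hr : 0 < s ^ 2 * ((y + 1) * (z + 1) * (x - 1)) :=
      mul_pos hs2p (mul_pos (mul_pos (by linarith) (by linarith)) (by linarith))
    have h2 : 1 + Real.cos θ = s ^ 2 * ((y + 1) * (z + 1) * (x - 1)) / (Sx ^ 2 * Sy ^ 2 * Sz ^ 2) :=
      (eq_div_iff (ne_of_gt hK)).mpr hCos2
    rw [h2]; exact div_pos hr hK
  rw [htan, div_eq_div_iff (ne_of_gt h1cp) (ne_of_gt hs0)]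
  apply mul_right_cancel₀ (ne_of_gt hK)
  linear_combination s * hSin2 - (y + z - x - 1) * hCos2

private lemma tanHalf (P A B : Fin 3 → ℝ) (hP : inH2 P) (hA : inH2 A) (hB : inH2 B)
    (hD : det3 P A B ≠ 0) :
    Real.tan ((hypAngle P A B + hypAngle A B P - hypAngle B P A) / 2)
      = (-(mink P B) + -(mink A B) - -(mink P A) - 1) / |det3 P A B| := by
  have hx : 1 < -(mink P A) := one_lt_nm P A B hP hA hB hD
  have hy : 1 < -(mink P B) := by
    refine one_lt_nm P B A hP hB hA ?_
    rw [det3_swap]; simpa using hD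
  have hz : 1 < -(mink A B) := by
    refine one_lt_nm A B P hA hB hP ?_
    rw [det3_cyc]; exact hD
  have hs2 : |det3 P A B| ^ 2 = 1 + 2 * -(mink P A) * -(mink P B) * -(mink A B)
      - (-(mink P A)) ^ 2 - (-(mink P B)) ^ 2 - (-(mink A B)) ^ 2 := by
    rw [sq_abs]; exact gramH P A B hP.1 hA.1 hB.1
  rw [hypAngle_eq P A B hP.1 hA.1 hB.1, hypAngle_eq A B P hA.1 hB.1 hP.1,
    hypAngle_eq B P A hB.1 hP.1 hA.1, mk_comm A P, mk_comm B P, mk_comm B A]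
  exact tanHalf_core (-(mink P A)) (-(mink P B)) (-(mink A B)) |det3 P A B| _ _ _
    hx hy hz (abs_pos.mpr hD) hs2 rfl rfl rfl

private lemma perj_div (e d1 d2 tb a' b' mp ma mb mc : ℝ) (hd1 : d1 ≠ 0) (hd2 : d2 ≠ 0)
    (htb : tb + 1 ≠ 0)
    (h : -e * (tb + 1) * (mb - mp) + d2 * (tb + 1) * (mb - ma)
        - d1 * (tb + 1) * (mc - mb) + (a' * d1 + b' * d2) * mb = 0) :
    -e / (d1 * d2) * (mb - mp) + 1 / d1 * (mb - ma) - 1 / d2 * (mc - mb)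
      = -((a' / d2 + b' / d1) / (tb + 1)) * mb := by
  field_simp
  linear_combination h

private lemma t1_div (u1 u2 k1 k2 d w1 w2 z1 z2 : ℝ) (hk1 : k1 ≠ 0) (hk2 : k2 ≠ 0) (hd : d ≠ 0)
    (h : u1 * k2 * w1 + u2 * k1 * w2 = d * (k2 * z1 - k1 * z2)) :
    u1 / (k1 * d) * w1 + u2 / (k2 * d) * w2 = 1 / k1 * z1 - 1 / k2 * z2 := by
  field_simp
  linear_combination h

private lemma sum_shift {m : ℕ} [NeZero m] (f : ZMod m → ℝ) :
    ∑ j : ZMod m, f (j + 1) = ∑ j : ZMod m, f j :=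
  Fintype.sum_equiv (Equiv.addRight (1 : ZMod m)) _ _ (fun _ => rfl)

/-- Local (vertex-star) form of Theorem 3.1(1): the radial coefficient of an infinitesimal
isometric deformation (with respect to the Minkowski norm squared) of a polyhedron inscribed
in the hyperboloid is a `2`-eigenfunction of the discrete hyperbolic Laplacian at the
central vertex. -/
theorem hyp_inf_iso_radial_eigen
    (m : ℕ) (hm : 3 ≤ m) [NeZero m]
    (p0 : Fin 3 → ℝ) (p : ZMod m → Fin 3 → ℝ)
    (hp0 : inH2 p0) (hp : ∀ j, inH2 (p j))
    (hdet : ∀ j : ZMod m, 0 < det3 p0 (p j) (p (j+1)))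
    (q0 : Fin 3 → ℝ) (q : ZMod m → Fin 3 → ℝ)
    (hiso0 : ∀ j : ZMod m, mink (q j - q0) (p j - p0) = 0)
    (hiso1 : ∀ j : ZMod m, mink (q (j+1) - q j) (p (j+1) - p j) = 0) :
    ∑ j : ZMod m, hypStarWeight m p0 p j * (-(mink (q j) (p j)) - -(mink q0 p0))
      = 2 * hypStarVertexWeight m p0 p * (-(mink q0 p0)) := by
  have hPP : mink p0 p0 = -1 := hp0.1
  have hpj : ∀ j : ZMod m, mink (p j) (p j) = -1 := fun j => (hp j).1
  have hDne : ∀ j : ZMod m, det3 p0 (p j) (p (j + 1)) ≠ 0 := fun j => ne_of_gt (hdet j)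
  have hdet' : ∀ j : ZMod m, 0 < det3 p0 (p (j - 1)) (p j) := fun j => by
    have h := hdet (j - 1); rwa [sub_add_cancel] at h
  have hDne' : ∀ j : ZMod m, det3 p0 (p (j - 1)) (p j) ≠ 0 := fun j => ne_of_gt (hdet' j)
  have hT1 : ∀ j : ZMod m, 1 < -(mink p0 (p j)) := fun j =>
    one_lt_nm p0 (p j) (p (j + 1)) hp0 (hp j) (hp (j + 1)) (hDne j)
  have hT1' : ∀ j : ZMod m, -(mink p0 (p j)) + 1 ≠ 0 := fun j => by
    have h := hT1 j; positivity
  -- closed form of the edge weights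
  have hW : ∀ j : ZMod m, hypStarWeight m p0 p j = ((-(mink p0 (p (j + 1))) + -(mink (p j) (p (j + 1))) - -(mink p0 (p j)) - 1) / det3 p0 (p j) (p (j + 1)) + (-(mink p0 (p (j - 1))) + -(mink (p (j - 1)) (p j)) - -(mink p0 (p j)) - 1) / det3 p0 (p (j - 1)) (p j)) / (-(mink p0 (p j)) + 1) := by
    intro j
    unfold hypStarWeight
    rw [tanHalf p0 (p j) (p (j + 1)) hp0 (hp j) (hp (j + 1)) (hDne j)]
    have e2 : Real.tan ((hypAngle p0 (p (j - 1)) (p j) + hypAngle (p j) p0 (p (j - 1))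
        - hypAngle (p (j - 1)) (p j) p0) / 2)
        = (-(mink p0 (p (j - 1))) + -(mink (p j) (p (j - 1))) - -(mink p0 (p j)) - 1)
          / |det3 p0 (p j) (p (j - 1))| := by
      rw [hypAngle_symm p0 (p (j - 1)) (p j), hypAngle_symm (p j) p0 (p (j - 1)),
        hypAngle_symm (p (j - 1)) (p j) p0]
      exact tanHalf p0 (p j) (p (j - 1)) hp0 (hp j) (hp (j - 1))
        (by rw [det3_swap]; simpa using hDne' j)
    rw [e2, cosh_half_sq (le_of_lt (hT1 j)), abs_of_pos (hdet j),
      show det3 p0 (p j) (p (j - 1)) = -(det3 p0 (p (j - 1)) (p j)) from det3_swap p0 (p (j - 1)) (p j),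
      abs_neg, abs_of_pos (hdet' j), mk_comm (p j) (p (j - 1)),
      show (2:ℝ) * ((-(mink p0 (p j)) + 1) / 2) = -(mink p0 (p j)) + 1 from by ring]
  -- rewrite the vertex weight
  have hR : hypStarVertexWeight m p0 p
      = ∑ j : ZMod m, (((-(mink p0 (p (j + 1))) + -(mink (p j) (p (j + 1))) - -(mink p0 (p j)) - 1) / det3 p0 (p j) (p (j + 1)) + (-(mink p0 (p (j - 1))) + -(mink (p (j - 1)) (p j)) - -(mink p0 (p j)) - 1) / det3 p0 (p (j - 1)) (p j)) / (-(mink p0 (p j)) + 1)) * ((-(mink p0 (p j)) - 1) / 2) := by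
    unfold hypStarVertexWeight
    exact Finset.sum_congr rfl (fun j _ => by
      rw [hW j, sinh_half_sq (le_of_lt (hT1 j))])
  -- the per-vertex stress identity, for an arbitrary vector v
  have hF3 : ∀ (v : Fin 3 → ℝ) (j : ZMod m),
      -(det3 (p (j - 1)) (p j) (p (j + 1))) / (det3 p0 (p (j - 1)) (p j) * det3 p0 (p j) (p (j + 1))) * (mink v (p j) - mink v p0)
        + 1 / det3 p0 (p (j - 1)) (p j) * (mink v (p j) - mink v (p (j - 1)))
        - 1 / det3 p0 (p j) (p (j + 1)) * (mink v (p (j + 1)) - mink v (p j))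
      = -(((-(mink p0 (p (j + 1))) + -(mink (p j) (p (j + 1))) - -(mink p0 (p j)) - 1) / det3 p0 (p j) (p (j + 1)) + (-(mink p0 (p (j - 1))) + -(mink (p (j - 1)) (p j)) - -(mink p0 (p j)) - 1) / det3 p0 (p (j - 1)) (p j)) / (-(mink p0 (p j)) + 1)) * mink v (p j) := by
    intro v j
    have h := P1 p0 (p (j - 1)) (p j) (p (j + 1)) v hPP (hpj j)
    exact perj_div _ _ _ _ _ _ _ _ _ _ (hDne' j) (hDne j) (hT1' j) h
  -- the per-triangle tangential stress identity
  have hF5 : ∀ j : ZMod m,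
      (-(mink p0 (p (j + 1))) + -(mink (p j) (p (j + 1))) - -(mink p0 (p j)) - 1) / ((-(mink p0 (p j)) + 1) * det3 p0 (p j) (p (j + 1))) * (mink q0 (p j) + mink p0 (p j) * mink q0 p0)
        + (-(mink p0 (p j)) + -(mink (p j) (p (j + 1))) - -(mink p0 (p (j + 1))) - 1) / ((-(mink p0 (p (j + 1))) + 1) * det3 p0 (p j) (p (j + 1))) * (mink q0 (p (j + 1)) + mink p0 (p (j + 1)) * mink q0 p0)
      = 1 / (-(mink p0 (p j)) + 1) * (det3 p0 (p j) q0) - 1 / (-(mink p0 (p (j + 1))) + 1) * (det3 p0 (p (j + 1)) q0) := by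
    intro j
    have h := T1 p0 (p j) (p (j + 1)) q0 hPP (hpj j) (hpj (j + 1))
    exact t1_div _ _ _ _ _ _ _ _ _ (hT1' j) (hT1' (j + 1)) (hDne j) h
  -- expanded isometry constraints
  have hiso0' : ∀ j : ZMod m, mink (q j) (p j) - mink (q j) p0 - mink q0 (p j) + mink q0 p0 = 0 := fun j => by
    have h := hiso0 j
    rw [mink_subl, mink_subr, mink_subr] at h
    linarith
  have hiso1' : ∀ j : ZMod m, mink (q (j + 1)) (p (j + 1)) - mink (q (j + 1)) (p j) - mink (q j) (p (j + 1)) + mink (q j) (p j) = 0 := fun j => by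
    have h := hiso1 j
    rw [mink_subl, mink_subr, mink_subr] at h
    linarith
  -- the key eigenvalue identity
  have key : ∑ j : ZMod m, (((-(mink p0 (p (j + 1))) + -(mink (p j) (p (j + 1))) - -(mink p0 (p j)) - 1) / det3 p0 (p j) (p (j + 1)) + (-(mink p0 (p (j - 1))) + -(mink (p (j - 1)) (p j)) - -(mink p0 (p j)) - 1) / det3 p0 (p (j - 1)) (p j)) / (-(mink p0 (p j)) + 1)) * (mink (q j) (p j) - (-(mink p0 (p j))) * mink q0 p0) = 0 := by
    have E1 : ∑ j : ZMod m,
        ((-(det3 (p (j - 1)) (p j) (p (j + 1))) / (det3 p0 (p (j - 1)) (p j) * det3 p0 (p j) (p (j + 1)))) * (mink (q j) (p j) - mink (q j) p0 - mink q0 (p j) + mink q0 p0)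
          + (1 / det3 p0 (p j) (p (j + 1))) * (mink (q (j + 1)) (p (j + 1)) - mink (q (j + 1)) (p j) - mink (q j) (p (j + 1)) + mink (q j) (p j))) = 0 :=
      Finset.sum_eq_zero (fun j _ => by rw [hiso0' j, hiso1' j]; ring)
    have Sh1 : ∑ j : ZMod m, (1 / det3 p0 (p (j - 1)) (p j)) * (mink (q j) (p j) - mink (q j) (p (j - 1)))
        = ∑ j : ZMod m, (1 / det3 p0 (p j) (p (j + 1))) * (mink (q (j + 1)) (p (j + 1)) - mink (q (j + 1)) (p j)) := by
      rw [← sum_shift (fun j => (1 / det3 p0 (p (j - 1)) (p j)) * (mink (q j) (p j) - mink (q j) (p (j - 1))))]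
      exact Finset.sum_congr rfl (fun j _ => by simp only [add_sub_cancel_right])
    have E2 : ∑ j : ZMod m,
        ((-(det3 (p (j - 1)) (p j) (p (j + 1))) / (det3 p0 (p (j - 1)) (p j) * det3 p0 (p j) (p (j + 1)))) * (mink (q j) (p j) - mink (q j) p0)
          + (1 / det3 p0 (p (j - 1)) (p j)) * (mink (q j) (p j) - mink (q j) (p (j - 1)))
          - (1 / det3 p0 (p j) (p (j + 1))) * (mink (q j) (p (j + 1)) - mink (q j) (p j)))
        = ∑ j : ZMod m, (-(det3 (p (j - 1)) (p j) (p (j + 1))) / (det3 p0 (p (j - 1)) (p j) * det3 p0 (p j) (p (j + 1)))) * (mink q0 (p j) - mink q0 p0) := by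
      have comb : ∑ j : ZMod m,
          ((-(det3 (p (j - 1)) (p j) (p (j + 1))) / (det3 p0 (p (j - 1)) (p j) * det3 p0 (p j) (p (j + 1)))) * (mink (q j) (p j) - mink (q j) p0)
            + (1 / det3 p0 (p (j - 1)) (p j)) * (mink (q j) (p j) - mink (q j) (p (j - 1)))
            - (1 / det3 p0 (p j) (p (j + 1))) * (mink (q j) (p (j + 1)) - mink (q j) (p j)))
          - ∑ j : ZMod m, (-(det3 (p (j - 1)) (p j) (p (j + 1))) / (det3 p0 (p (j - 1)) (p j) * det3 p0 (p j) (p (j + 1)))) * (mink q0 (p j) - mink q0 p0)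
          - ∑ j : ZMod m,
              ((-(det3 (p (j - 1)) (p j) (p (j + 1))) / (det3 p0 (p (j - 1)) (p j) * det3 p0 (p j) (p (j + 1)))) * (mink (q j) (p j) - mink (q j) p0 - mink q0 (p j) + mink q0 p0)
                + (1 / det3 p0 (p j) (p (j + 1))) * (mink (q (j + 1)) (p (j + 1)) - mink (q (j + 1)) (p j) - mink (q j) (p (j + 1)) + mink (q j) (p j)))
          = ∑ j : ZMod m, (1 / det3 p0 (p (j - 1)) (p j)) * (mink (q j) (p j) - mink (q j) (p (j - 1)))
            - ∑ j : ZMod m, (1 / det3 p0 (p j) (p (j + 1))) * (mink (q (j + 1)) (p (j + 1)) - mink (q (j + 1)) (p j)) := by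
        rw [← Finset.sum_sub_distrib, ← Finset.sum_sub_distrib, ← Finset.sum_sub_distrib]
        exact Finset.sum_congr rfl (fun j _ => by ring)
      rw [E1, Sh1] at comb
      linarith [comb]
    have E3 : ∑ j : ZMod m, -(((-(mink p0 (p (j + 1))) + -(mink (p j) (p (j + 1))) - -(mink p0 (p j)) - 1) / det3 p0 (p j) (p (j + 1)) + (-(mink p0 (p (j - 1))) + -(mink (p (j - 1)) (p j)) - -(mink p0 (p j)) - 1) / det3 p0 (p (j - 1)) (p j)) / (-(mink p0 (p j)) + 1)) * (mink (q j) (p j))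
        = ∑ j : ZMod m, (-(det3 (p (j - 1)) (p j) (p (j + 1))) / (det3 p0 (p (j - 1)) (p j) * det3 p0 (p j) (p (j + 1)))) * (mink q0 (p j) - mink q0 p0) := by
      rw [← E2]
      exact Finset.sum_congr rfl (fun j _ => (hF3 (q j) j).symm)
    have tele2 : ∑ j : ZMod m, (1 / det3 p0 (p (j - 1)) (p j)) * (mink q0 (p j) - mink q0 (p (j - 1)))
        = ∑ j : ZMod m, (1 / det3 p0 (p j) (p (j + 1))) * (mink q0 (p (j + 1)) - mink q0 (p j)) := by
      rw [← sum_shift (fun j => (1 / det3 p0 (p (j - 1)) (p j)) * (mink q0 (p j) - mink q0 (p (j - 1))))]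
      exact Finset.sum_congr rfl (fun j _ => by simp only [add_sub_cancel_right])
    have E4 : ∑ j : ZMod m, (-(det3 (p (j - 1)) (p j) (p (j + 1))) / (det3 p0 (p (j - 1)) (p j) * det3 p0 (p j) (p (j + 1)))) * (mink q0 (p j) - mink q0 p0)
        = ∑ j : ZMod m, -(((-(mink p0 (p (j + 1))) + -(mink (p j) (p (j + 1))) - -(mink p0 (p j)) - 1) / det3 p0 (p j) (p (j + 1)) + (-(mink p0 (p (j - 1))) + -(mink (p (j - 1)) (p j)) - -(mink p0 (p j)) - 1) / det3 p0 (p (j - 1)) (p j)) / (-(mink p0 (p j)) + 1)) * (mink q0 (p j)) := by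
      have comb2 : ∑ j : ZMod m, (-(det3 (p (j - 1)) (p j) (p (j + 1))) / (det3 p0 (p (j - 1)) (p j) * det3 p0 (p j) (p (j + 1)))) * (mink q0 (p j) - mink q0 p0)
          - ∑ j : ZMod m,
              ((-(det3 (p (j - 1)) (p j) (p (j + 1))) / (det3 p0 (p (j - 1)) (p j) * det3 p0 (p j) (p (j + 1)))) * (mink q0 (p j) - mink q0 p0)
                + (1 / det3 p0 (p (j - 1)) (p j)) * (mink q0 (p j) - mink q0 (p (j - 1)))
                - (1 / det3 p0 (p j) (p (j + 1))) * (mink q0 (p (j + 1)) - mink q0 (p j)))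
          = ∑ j : ZMod m, (1 / det3 p0 (p j) (p (j + 1))) * (mink q0 (p (j + 1)) - mink q0 (p j))
            - ∑ j : ZMod m, (1 / det3 p0 (p (j - 1)) (p j)) * (mink q0 (p j) - mink q0 (p (j - 1))) := by
        rw [← Finset.sum_sub_distrib, ← Finset.sum_sub_distrib]
        exact Finset.sum_congr rfl (fun j _ => by ring)
      have hq0 : ∑ j : ZMod m,
          ((-(det3 (p (j - 1)) (p j) (p (j + 1))) / (det3 p0 (p (j - 1)) (p j) * det3 p0 (p j) (p (j + 1)))) * (mink q0 (p j) - mink q0 p0)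
            + (1 / det3 p0 (p (j - 1)) (p j)) * (mink q0 (p j) - mink q0 (p (j - 1)))
            - (1 / det3 p0 (p j) (p (j + 1))) * (mink q0 (p (j + 1)) - mink q0 (p j)))
          = ∑ j : ZMod m, -(((-(mink p0 (p (j + 1))) + -(mink (p j) (p (j + 1))) - -(mink p0 (p j)) - 1) / det3 p0 (p j) (p (j + 1)) + (-(mink p0 (p (j - 1))) + -(mink (p (j - 1)) (p j)) - -(mink p0 (p j)) - 1) / det3 p0 (p (j - 1)) (p j)) / (-(mink p0 (p j)) + 1)) * (mink q0 (p j)) :=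
        Finset.sum_congr rfl (fun j _ => hF3 q0 j)
      rw [hq0, tele2] at comb2
      linarith [comb2]
    have shB : ∑ j : ZMod m,
        (-(mink p0 (p j)) + -(mink (p j) (p (j + 1))) - -(mink p0 (p (j + 1))) - 1) / ((-(mink p0 (p (j + 1))) + 1) * det3 p0 (p j) (p (j + 1))) * (mink q0 (p (j + 1)) + mink p0 (p (j + 1)) * mink q0 p0)
        = ∑ j : ZMod m,
        (-(mink p0 (p (j - 1))) + -(mink (p (j - 1)) (p j)) - -(mink p0 (p j)) - 1) / ((-(mink p0 (p j)) + 1) * det3 p0 (p (j - 1)) (p j)) * (mink q0 (p j) + mink p0 (p j) * mink q0 p0) := by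
      rw [← sum_shift (fun j => (-(mink p0 (p (j - 1))) + -(mink (p (j - 1)) (p j)) - -(mink p0 (p j)) - 1) / ((-(mink p0 (p j)) + 1) * det3 p0 (p (j - 1)) (p j)) * (mink q0 (p j) + mink p0 (p j) * mink q0 p0))]
      exact Finset.sum_congr rfl (fun j _ => by simp only [add_sub_cancel_right])
    have teleR : ∑ j : ZMod m,
        (1 / (-(mink p0 (p j)) + 1) * (det3 p0 (p j) q0) - 1 / (-(mink p0 (p (j + 1))) + 1) * (det3 p0 (p (j + 1)) q0)) = 0 := by
      have hs := sum_shift (fun j => 1 / (-(mink p0 (p j)) + 1) * (det3 p0 (p j) q0))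
      rw [Finset.sum_sub_distrib]
      rw [show ∑ j : ZMod m, 1 / (-(mink p0 (p (j + 1))) + 1) * (det3 p0 (p (j + 1)) q0)
          = ∑ j : ZMod m, (fun j => 1 / (-(mink p0 (p j)) + 1) * (det3 p0 (p j) q0)) (j + 1) from rfl, hs]
      ring
    have E5 : ∑ j : ZMod m, (((-(mink p0 (p (j + 1))) + -(mink (p j) (p (j + 1))) - -(mink p0 (p j)) - 1) / det3 p0 (p j) (p (j + 1)) + (-(mink p0 (p (j - 1))) + -(mink (p (j - 1)) (p j)) - -(mink p0 (p j)) - 1) / det3 p0 (p (j - 1)) (p j)) / (-(mink p0 (p j)) + 1)) * (mink q0 (p j) + mink p0 (p j) * mink q0 p0) = 0 := by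
      have hsum : ∑ j : ZMod m,
          ((-(mink p0 (p (j + 1))) + -(mink (p j) (p (j + 1))) - -(mink p0 (p j)) - 1) / ((-(mink p0 (p j)) + 1) * det3 p0 (p j) (p (j + 1))) * (mink q0 (p j) + mink p0 (p j) * mink q0 p0)
            + (-(mink p0 (p j)) + -(mink (p j) (p (j + 1))) - -(mink p0 (p (j + 1))) - 1) / ((-(mink p0 (p (j + 1))) + 1) * det3 p0 (p j) (p (j + 1))) * (mink q0 (p (j + 1)) + mink p0 (p (j + 1)) * mink q0 p0))
          = 0 := by
        rw [show (0:ℝ) = ∑ j : ZMod m,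
            (1 / (-(mink p0 (p j)) + 1) * (det3 p0 (p j) q0) - 1 / (-(mink p0 (p (j + 1))) + 1) * (det3 p0 (p (j + 1)) q0)) from teleR.symm]
        exact Finset.sum_congr rfl (fun j _ => hF5 j)
      have hadd : ∑ j : ZMod m,
          ((-(mink p0 (p (j + 1))) + -(mink (p j) (p (j + 1))) - -(mink p0 (p j)) - 1) / ((-(mink p0 (p j)) + 1) * det3 p0 (p j) (p (j + 1))) * (mink q0 (p j) + mink p0 (p j) * mink q0 p0)
            + (-(mink p0 (p j)) + -(mink (p j) (p (j + 1))) - -(mink p0 (p (j + 1))) - 1) / ((-(mink p0 (p (j + 1))) + 1) * det3 p0 (p j) (p (j + 1))) * (mink q0 (p (j + 1)) + mink p0 (p (j + 1)) * mink q0 p0))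
          = (∑ j : ZMod m, (-(mink p0 (p (j + 1))) + -(mink (p j) (p (j + 1))) - -(mink p0 (p j)) - 1) / ((-(mink p0 (p j)) + 1) * det3 p0 (p j) (p (j + 1))) * (mink q0 (p j) + mink p0 (p j) * mink q0 p0))
            + ∑ j : ZMod m, (-(mink p0 (p j)) + -(mink (p j) (p (j + 1))) - -(mink p0 (p (j + 1))) - 1) / ((-(mink p0 (p (j + 1))) + 1) * det3 p0 (p j) (p (j + 1))) * (mink q0 (p (j + 1)) + mink p0 (p (j + 1)) * mink q0 p0) :=
        Finset.sum_add_distrib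
      have hCsplit : ∑ j : ZMod m, (((-(mink p0 (p (j + 1))) + -(mink (p j) (p (j + 1))) - -(mink p0 (p j)) - 1) / det3 p0 (p j) (p (j + 1)) + (-(mink p0 (p (j - 1))) + -(mink (p (j - 1)) (p j)) - -(mink p0 (p j)) - 1) / det3 p0 (p (j - 1)) (p j)) / (-(mink p0 (p j)) + 1)) * (mink q0 (p j) + mink p0 (p j) * mink q0 p0)
          = (∑ j : ZMod m, (-(mink p0 (p (j + 1))) + -(mink (p j) (p (j + 1))) - -(mink p0 (p j)) - 1) / ((-(mink p0 (p j)) + 1) * det3 p0 (p j) (p (j + 1))) * (mink q0 (p j) + mink p0 (p j) * mink q0 p0))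
            + ∑ j : ZMod m, (-(mink p0 (p (j - 1))) + -(mink (p (j - 1)) (p j)) - -(mink p0 (p j)) - 1) / ((-(mink p0 (p j)) + 1) * det3 p0 (p (j - 1)) (p j)) * (mink q0 (p j) + mink p0 (p j) * mink q0 p0) := by
        rw [← Finset.sum_add_distrib]
        exact Finset.sum_congr rfl (fun j _ => by
          field_simp [hT1' j, hDne j, hDne' j])
      rw [hCsplit, ← shB]
      linarith [hsum, hadd]
    have h6 : ∑ j : ZMod m, -(((-(mink p0 (p (j + 1))) + -(mink (p j) (p (j + 1))) - -(mink p0 (p j)) - 1) / det3 p0 (p j) (p (j + 1)) + (-(mink p0 (p (j - 1))) + -(mink (p (j - 1)) (p j)) - -(mink p0 (p j)) - 1) / det3 p0 (p (j - 1)) (p j)) / (-(mink p0 (p j)) + 1)) * (mink (q j) (p j)) = ∑ j : ZMod m, -(((-(mink p0 (p (j + 1))) + -(mink (p j) (p (j + 1))) - -(mink p0 (p j)) - 1) / det3 p0 (p j) (p (j + 1)) + (-(mink p0 (p (j - 1))) + -(mink (p (j - 1)) (p j)) - -(mink p0 (p j)) - 1) / det3 p0 (p (j - 1)) (p j)) /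 (-(mink p0 (p j)) + 1)) * (mink q0 (p j)) :=
      E3.trans E4
    have hsplit : ∑ j : ZMod m, (((-(mink p0 (p (j + 1))) + -(mink (p j) (p (j + 1))) - -(mink p0 (p j)) - 1) / det3 p0 (p j) (p (j + 1)) + (-(mink p0 (p (j - 1))) + -(mink (p (j - 1)) (p j)) - -(mink p0 (p j)) - 1) / det3 p0 (p (j - 1)) (p j)) / (-(mink p0 (p j)) + 1)) * (mink (q j) (p j) - (-(mink p0 (p j))) * mink q0 p0)
        = (∑ j : ZMod m, -(((-(mink p0 (p (j + 1))) + -(mink (p j) (p (j + 1))) - -(mink p0 (p j)) - 1) / det3 p0 (p j) (p (j + 1)) + (-(mink p0 (p (j - 1))) + -(mink (p (j - 1)) (p j)) - -(mink p0 (p j)) - 1) / det3 p0 (p (j - 1)) (p j)) / (-(mink p0 (p j)) + 1)) * (mink q0 (p j))) - (∑ j : ZMod m, -(((-(mink p0 (p (j + 1))) + -(mink (p j) (p (j + 1))) - -(mink p0 (p j)) - 1) / det3 p0 (p j) (p (j + 1)) + (-(mink p0 (p (j - 1))) + -(mink (p (j - 1)) (p j)) - -(mink p0 (p j)) - 1)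 / det3 p0 (p (j - 1)) (p j)) / (-(mink p0 (p j)) + 1)) * (mink (q j) (p j)))
          + ∑ j : ZMod m, (((-(mink p0 (p (j + 1))) + -(mink (p j) (p (j + 1))) - -(mink p0 (p j)) - 1) / det3 p0 (p j) (p (j + 1)) + (-(mink p0 (p (j - 1))) + -(mink (p (j - 1)) (p j)) - -(mink p0 (p j)) - 1) / det3 p0 (p (j - 1)) (p j)) / (-(mink p0 (p j)) + 1)) * (mink q0 (p j) + mink p0 (p j) * mink q0 p0) := by
      rw [← Finset.sum_sub_distrib, ← Finset.sum_add_distrib]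
      exact Finset.sum_congr rfl (fun j _ => by ring)
    rw [hsplit, h6, E5]
    ring
  -- final assembly
  have hL : ∑ j : ZMod m, hypStarWeight m p0 p j * (-(mink (q j) (p j)) - -(mink q0 p0))
      = ∑ j : ZMod m, (((-(mink p0 (p (j + 1))) + -(mink (p j) (p (j + 1))) - -(mink p0 (p j)) - 1) / det3 p0 (p j) (p (j + 1)) + (-(mink p0 (p (j - 1))) + -(mink (p (j - 1)) (p j)) - -(mink p0 (p j)) - 1) / det3 p0 (p (j - 1)) (p j)) / (-(mink p0 (p j)) + 1)) * (-(mink (q j) (p j)) - -(mink q0 p0)) :=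
    Finset.sum_congr rfl (fun j _ => by rw [hW j])
  rw [hL, hR]
  rw [← sub_eq_zero]
  rw [show ∑ j : ZMod m, (((-(mink p0 (p (j + 1))) + -(mink (p j) (p (j + 1))) - -(mink p0 (p j)) - 1) / det3 p0 (p j) (p (j + 1)) + (-(mink p0 (p (j - 1))) + -(mink (p (j - 1)) (p j)) - -(mink p0 (p j)) - 1) / det3 p0 (p (j - 1)) (p j)) / (-(mink p0 (p j)) + 1)) * (-(mink (q j) (p j)) - -(mink q0 p0))
      - 2 * (∑ j : ZMod m, (((-(mink p0 (p (j + 1))) + -(mink (p j) (p (j + 1))) - -(mink p0 (p j)) - 1) / det3 p0 (p j) (p (j + 1)) + (-(mink p0 (p (j - 1))) + -(mink (p (j - 1)) (p j)) - -(mink p0 (p j)) - 1) / det3 p0 (p (j - 1)) (p j)) / (-(mink p0 (p j)) + 1)) * ((-(mink p0 (p j)) - 1) / 2)) * (-(mink q0 p0))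
      = -(∑ j : ZMod m, (((-(mink p0 (p (j + 1))) + -(mink (p j) (p (j + 1))) - -(mink p0 (p j)) - 1) / det3 p0 (p j) (p (j + 1)) + (-(mink p0 (p (j - 1))) + -(mink (p (j - 1)) (p j)) - -(mink p0 (p j)) - 1) / det3 p0 (p (j - 1)) (p j)) / (-(mink p0 (p j)) + 1)) * (mink (q j) (p j) - (-(mink p0 (p j))) * mink q0 p0)) from by
    rw [mul_comm (2:ℝ) (∑ j : ZMod m, (((-(mink p0 (p (j + 1))) + -(mink (p j) (p (j + 1))) - -(mink p0 (p j)) - 1) / det3 p0 (p j) (p (j + 1)) + (-(mink p0 (p (j - 1))) + -(mink (p (j - 1)) (p j)) - -(mink p0 (p j)) - 1) / det3 p0 (p (j - 1)) (p j)) / (-(mink p0 (p j)) + 1)) * ((-(mink p0 (p j)) - 1) / 2)), mul_assoc,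
      Finset.sum_mul, ← Finset.sum_sub_distrib, ← Finset.sum_neg_distrib]
    exact Finset.sum_congr rfl (fun j _ => by ring)]
  rw [key]
  ring
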